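/- Let φ₂(u) = 1/log u + 1/(1−u) for positive u ≠ 1, extended continuously by φ₂(1) = 1/2. Then (log φ₂)'' ≥ 0 on (0,∞)\{1}, i.e. φ₂(u)·φ₂''(u) − (φ₂'(u))² ≥ 0; equivalently φ₂'/φ₂ is increasing. -/

import Mathlib

noncomputable def phi2 (u : ℝ) : ℝ :=
  if u = 1 then 1 / 2 else 1 / Real.log u + 1 / (1 - u)

private lemma hasDerivAt_poly4 (a b c d e x : ℝ) :
    HasDerivAt (fun x : ℝ => a*x^4 + b*x^3 + c*x^2 + d*x + e)
      (4*a*x^3 + 3*b*x^2 + 2*c*x + d) x := by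
  have h := (((((hasDerivAt_pow 4 x).const_mul a).add
      ((hasDerivAt_pow 3 x).const_mul b)).add
      ((hasDerivAt_pow 2 x).const_mul c)).add
      ((hasDerivAt_id x).const_mul d)).add_const e
  refine h.congr_deriv ?_
  push_cast
  ring

private lemma hasDerivAt_term (a b c d e k x : ℝ) :
    HasDerivAt (fun x : ℝ => (a*x^4 + b*x^3 + c*x^2 + d*x + e) * Real.exp (k*x))
      ((4*a*x^3 + 3*b*x^2 + 2*c*x + d + k*(a*x^4 + b*x^3 + c*x^2 + d*x + e)) * Real.exp (k*x)) x := by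
  have he : HasDerivAt (fun x : ℝ => Real.exp (k*x)) (Real.exp (k*x) * k) x := by
    simpa using (((hasDerivAt_id x).const_mul k).exp)
  have h := (hasDerivAt_poly4 a b c d e x).mul he
  refine h.congr_deriv ?_
  ring

private noncomputable def s0 (x : ℝ) : ℝ :=
  (0*x^4 + 0*x^3 + 0*x^2 + 1*x + 1) * Real.exp (2*x) +
  (0*x^4 + (-2)*x^3 + 1*x^2 + (-6)*x + (-4)) * Real.exp (1*x) +
  (1*x^4 + 2*x^3 + (-1)*x^2 + 12*x + 6) * Real.exp (0*x) +
  (0*x^4 + 0*x^3 + (-1)*x^2 + (-10)*x + (-4)) * Real.exp ((-1)*x) +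
  (0*x^4 + 0*x^3 + 1*x^2 + 3*x + 1) * Real.exp ((-2)*x)

private noncomputable def s1 (x : ℝ) : ℝ :=
  (0*x^4 + 0*x^3 + 0*x^2 + 2*x + 3) * Real.exp (2*x) +
  (0*x^4 + (-2)*x^3 + (-5)*x^2 + (-4)*x + (-10)) * Real.exp (1*x) +
  (0*x^4 + 4*x^3 + 6*x^2 + (-2)*x + 12) * Real.exp (0*x) +
  (0*x^4 + 0*x^3 + 1*x^2 + 8*x + (-6)) * Real.exp ((-1)*x) +
  (0*x^4 + 0*x^3 + (-2)*x^2 + (-4)*x + 1) * Real.exp ((-2)*x)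

private noncomputable def s2 (x : ℝ) : ℝ :=
  (0*x^4 + 0*x^3 + 0*x^2 + 4*x + 8) * Real.exp (2*x) +
  (0*x^4 + (-2)*x^3 + (-11)*x^2 + (-14)*x + (-14)) * Real.exp (1*x) +
  (0*x^4 + 0*x^3 + 12*x^2 + 12*x + (-2)) * Real.exp (0*x) +
  (0*x^4 + 0*x^3 + (-1)*x^2 + (-6)*x + 14) * Real.exp ((-1)*x) +
  (0*x^4 + 0*x^3 + 4*x^2 + 4*x + (-6)) * Real.exp ((-2)*x)

private noncomputable def s3 (x : ℝ) : ℝ :=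
  (0*x^4 + 0*x^3 + 0*x^2 + 8*x + 20) * Real.exp (2*x) +
  (0*x^4 + (-2)*x^3 + (-17)*x^2 + (-36)*x + (-28)) * Real.exp (1*x) +
  (0*x^4 + 0*x^3 + 0*x^2 + 24*x + 12) * Real.exp (0*x) +
  (0*x^4 + 0*x^3 + 1*x^2 + 4*x + (-20)) * Real.exp ((-1)*x) +
  (0*x^4 + 0*x^3 + (-8)*x^2 + 0*x + 16) * Real.exp ((-2)*x)

private noncomputable def s4 (x : ℝ) : ℝ :=
  (0*x^4 + 0*x^3 + 0*x^2 + 16*x + 48) * Real.exp (2*x) +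
  (0*x^4 + (-2)*x^3 + (-23)*x^2 + (-70)*x + (-64)) * Real.exp (1*x) +
  (0*x^4 + 0*x^3 + 0*x^2 + 0*x + 24) * Real.exp (0*x) +
  (0*x^4 + 0*x^3 + (-1)*x^2 + (-2)*x + 24) * Real.exp ((-1)*x) +
  (0*x^4 + 0*x^3 + 16*x^2 + (-16)*x + (-32)) * Real.exp ((-2)*x)

private noncomputable def s5 (x : ℝ) : ℝ :=
  (0*x^4 + 0*x^3 + 0*x^2 + 32*x + 112) * Real.exp (2*x) +
  (0*x^4 + (-2)*x^3 + (-29)*x^2 + (-116)*x + (-134)) * Real.exp (1*x) +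
  (0*x^4 + 0*x^3 + 0*x^2 + 0*x + 0) * Real.exp (0*x) +
  (0*x^4 + 0*x^3 + 1*x^2 + 0*x + (-26)) * Real.exp ((-1)*x) +
  (0*x^4 + 0*x^3 + (-32)*x^2 + 64*x + 48) * Real.exp ((-2)*x)

private noncomputable def s6 (x : ℝ) : ℝ :=
  (0*x^4 + 0*x^3 + 0*x^2 + 64*x + 256) * Real.exp (2*x) +
  (0*x^4 + (-2)*x^3 + (-35)*x^2 + (-174)*x + (-250)) * Real.exp (1*x) +
  (0*x^4 + 0*x^3 + 0*x^2 + 0*x + 0) * Real.exp (0*x) +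
  (0*x^4 + 0*x^3 + (-1)*x^2 + 2*x + 26) * Real.exp ((-1)*x) +
  (0*x^4 + 0*x^3 + 64*x^2 + (-192)*x + (-32)) * Real.exp ((-2)*x)

private noncomputable def s7 (x : ℝ) : ℝ :=
  (0*x^4 + 0*x^3 + 0*x^2 + 128*x + 576) * Real.exp (2*x) +
  (0*x^4 + (-2)*x^3 + (-41)*x^2 + (-244)*x + (-424)) * Real.exp (1*x) +
  (0*x^4 + 0*x^3 + 0*x^2 + 0*x + 0) * Real.exp (0*x) +
  (0*x^4 + 0*x^3 + 1*x^2 + (-4)*x + (-24)) * Real.exp ((-1)*x) +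
  (0*x^4 + 0*x^3 + (-128)*x^2 + 512*x + (-128)) * Real.exp ((-2)*x)

private noncomputable def s8 (x : ℝ) : ℝ :=
  (0*x^4 + 0*x^3 + 0*x^2 + 256*x + 1280) * Real.exp (2*x) +
  (0*x^4 + (-2)*x^3 + (-47)*x^2 + (-326)*x + (-668)) * Real.exp (1*x) +
  (0*x^4 + 0*x^3 + 0*x^2 + 0*x + 0) * Real.exp (0*x) +
  (0*x^4 + 0*x^3 + (-1)*x^2 + 6*x + 20) * Real.exp ((-1)*x) +
  (0*x^4 + 0*x^3 + 256*x^2 + (-1280)*x + 768) * Real.exp ((-2)*x)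

private lemma sd0 (x : ℝ) : HasDerivAt s0 (s1 x) x := by
  have h := (((((hasDerivAt_term 0 0 0 1 1 2 x).add (hasDerivAt_term 0 (-2) 1 (-6) (-4) 1 x)).add (hasDerivAt_term 1 2 (-1) 12 6 0 x)).add (hasDerivAt_term 0 0 (-1) (-10) (-4) (-1) x)).add (hasDerivAt_term 0 0 1 3 1 (-2) x))
  unfold s0 s1
  refine h.congr_deriv ?_
  ring

private lemma sd1 (x : ℝ) : HasDerivAt s1 (s2 x) x := by
  have h := (((((hasDerivAt_term 0 0 0 2 3 2 x).add (hasDerivAt_term 0 (-2) (-5) (-4) (-10) 1 x)).add (hasDerivAt_term 0 4 6 (-2) 12 0 x)).add (hasDerivAt_term 0 0 1 8 (-6) (-1) x)).add (hasDerivAt_term 0 0 (-2) (-4) 1 (-2) x))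
  unfold s1 s2
  refine h.congr_deriv ?_
  ring

private lemma sd2 (x : ℝ) : HasDerivAt s2 (s3 x) x := by
  have h := (((((hasDerivAt_term 0 0 0 4 8 2 x).add (hasDerivAt_term 0 (-2) (-11) (-14) (-14) 1 x)).add (hasDerivAt_term 0 0 12 12 (-2) 0 x)).add (hasDerivAt_term 0 0 (-1) (-6) 14 (-1) x)).add (hasDerivAt_term 0 0 4 4 (-6) (-2) x))
  unfold s2 s3
  refine h.congr_deriv ?_
  ring

private lemma sd3 (x : ℝ) : HasDerivAt s3 (s4 x) x := by
  have h := (((((hasDerivAt_term 0 0 0 8 20 2 x).add (hasDerivAt_term 0 (-2) (-17) (-36) (-28) 1 x)).add (hasDerivAt_term 0 0 0 24 12 0 x)).add (hasDerivAt_term 0 0 1 4 (-20) (-1) x)).add (hasDerivAt_term 0 0 (-8) 0 16 (-2) x))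
  unfold s3 s4
  refine h.congr_deriv ?_
  ring

private lemma sd4 (x : ℝ) : HasDerivAt s4 (s5 x) x := by
  have h := (((((hasDerivAt_term 0 0 0 16 48 2 x).add (hasDerivAt_term 0 (-2) (-23) (-70) (-64) 1 x)).add (hasDerivAt_term 0 0 0 0 24 0 x)).add (hasDerivAt_term 0 0 (-1) (-2) 24 (-1) x)).add (hasDerivAt_term 0 0 16 (-16) (-32) (-2) x))
  unfold s4 s5
  refine h.congr_deriv ?_
  ring

private lemma sd5 (x : ℝ) : HasDerivAt s5 (s6 x) x := by
  have h := (((((hasDerivAt_term 0 0 0 32 112 2 x).add (hasDerivAt_term 0 (-2) (-29) (-116) (-134) 1 x)).add (hasDerivAt_term 0 0 0 0 0 0 x)).add (hasDerivAt_term 0 0 1 0 (-26) (-1) x)).add (hasDerivAt_term 0 0 (-32) 64 48 (-2) x))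
  unfold s5 s6
  refine h.congr_deriv ?_
  ring

private lemma sd6 (x : ℝ) : HasDerivAt s6 (s7 x) x := by
  have h := (((((hasDerivAt_term 0 0 0 64 256 2 x).add (hasDerivAt_term 0 (-2) (-35) (-174) (-250) 1 x)).add (hasDerivAt_term 0 0 0 0 0 0 x)).add (hasDerivAt_term 0 0 (-1) 2 26 (-1) x)).add (hasDerivAt_term 0 0 64 (-192) (-32) (-2) x))
  unfold s6 s7
  refine h.congr_deriv ?_
  ring

private lemma sd7 (x : ℝ) : HasDerivAt s7 (s8 x) x := by
  have h := (((((hasDerivAt_term 0 0 0 128 576 2 x).add (hasDerivAt_term 0 (-2) (-41) (-244) (-424) 1 x)).add (hasDerivAt_term 0 0 0 0 0 0 x)).add (hasDerivAt_term 0 0 1 (-4) (-24) (-1) x)).add (hasDerivAt_term 0 0 (-128) 512 (-128) (-2) x))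
  unfold s7 s8
  refine h.congr_deriv ?_
  ring

private lemma s0_zero : s0 0 = 0 := by
  unfold s0
  norm_num

private lemma s1_zero : s1 0 = 0 := by
  unfold s1
  norm_num

private lemma s2_zero : s2 0 = 0 := by
  unfold s2
  norm_num

private lemma s3_zero : s3 0 = 0 := by
  unfold s3
  norm_num

private lemma s4_zero : s4 0 = 0 := by
  unfold s4
  norm_num

private lemma s5_zero : s5 0 = 0 := by
  unfold s5
  norm_num

private lemma s6_zero : s6 0 = 0 := by
  unfold s6
  norm_num

private lemma s7_zero : s7 0 = 0 := by
  unfold s7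
  norm_num
private lemma s8_nonneg (x : ℝ) : 0 ≤ s8 x := by
  unfold s8
  rcases le_total 0 x with hx | hx
  · -- x ≥ 0 : work with E = exp x
    have hE : (1:ℝ) + x + x^2/2 ≤ Real.exp x := Real.quadratic_le_exp_of_nonneg hx
    have hEp : (0:ℝ) < Real.exp x := Real.exp_pos x
    have e1 : Real.exp (1*x) = Real.exp x := by norm_num
    have e2 : Real.exp (2*x) = Real.exp x ^ 2 := by
      rw [two_mul, Real.exp_add]; ring
    have em1 : Real.exp ((-1)*x) = (Real.exp x)⁻¹ := by
      rw [neg_one_mul, Real.exp_neg]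
    have em2 : Real.exp ((-2)*x) = (Real.exp x ^ 2)⁻¹ := by
      rw [show ((-2):ℝ)*x = -(2*x) by ring, Real.exp_neg, e2]
    rw [e1, e2, em1, em2]
    set E := Real.exp x with hEdef
    have hE1 : (1:ℝ) ≤ E := by nlinarith [sq_nonneg x]
    have hEne : E ≠ 0 := ne_of_gt hEp
    have key : 0 ≤ (256*x+1280)*E^4 + (-2*x^3-47*x^2-326*x-668)*E^3
        + (-x^2+6*x+20)*E + (256*x^2-1280*x+768) := by
      have hx2 := sq_nonneg x
      have hx3 : 0 ≤ x^3 := pow_nonneg hx 3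
      have h1 : 0 ≤ (256*x+1280) * ((E - (1+x+x^2/2)) * E^3) :=
        mul_nonneg (by linarith) (mul_nonneg (by linarith) (by positivity))
      have h2 : 0 ≤ (126*x^3+849*x^2+1210*x+612) * (E^3 - E) := by
        have hcube : 0 ≤ E * ((E-1) * (E+1)) :=
          mul_nonneg hEp.le (mul_nonneg (by linarith) (by linarith))
        have : 0 ≤ E^3 - E := by nlinarith [hcube]
        exact mul_nonneg (by linarith) this
      have h3 : 0 ≤ (126*x^3+848*x^2+1216*x+632) * (E - 1 - x) :=
        mul_nonneg (by linarith) (by nlinarith [sq_nonneg x])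
      have h4 : (0:ℝ) ≤ 126*x^4+974*x^3+2320*x^2+568*x+1400 := by
        have := pow_nonneg hx 4
        linarith
      linarith [h1, h2, h3, h4]
    have hid : (0*x^4 + 0*x^3 + 0*x^2 + 256*x + 1280) * E ^ 2 +
        (0*x^4 + (-2)*x^3 + (-47)*x^2 + (-326)*x + (-668)) * E +
        (0*x^4 + 0*x^3 + 0*x^2 + 0*x + 0) * Real.exp (0*x) +
        (0*x^4 + 0*x^3 + (-1)*x^2 + 6*x + 20) * E⁻¹ +
        (0*x^4 + 0*x^3 + 256*x^2 + (-1280)*x + 768) * (E^2)⁻¹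
        = ((256*x+1280)*E^4 + (-2*x^3-47*x^2-326*x-668)*E^3
            + (-x^2+6*x+20)*E + (256*x^2-1280*x+768)) / E^2 := by
      field_simp
      ring
    rw [hid]
    exact div_nonneg key (by positivity)
  · -- x ≤ 0 : work with F = exp (-x)
    have hF : (1:ℝ) + (-x) + (-x)^2/2 ≤ Real.exp (-x) :=
      Real.quadratic_le_exp_of_nonneg (by linarith)
    have hFp : (0:ℝ) < Real.exp (-x) := Real.exp_pos _
    have e1 : Real.exp (1*x) = (Real.exp (-x))⁻¹ := by
      rw [one_mul, ← Real.exp_neg, neg_neg]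
    have e2 : Real.exp (2*x) = (Real.exp (-x) ^ 2)⁻¹ := by
      rw [show (2:ℝ)*x = -((-x) + (-x)) by ring, Real.exp_neg, Real.exp_add, sq]
    have em1 : Real.exp ((-1)*x) = Real.exp (-x) := by norm_num
    have em2 : Real.exp ((-2)*x) = Real.exp (-x) ^ 2 := by
      rw [show ((-2):ℝ)*x = (-x) + (-x) by ring, Real.exp_add, sq]
    rw [e1, e2, em1, em2]
    set F := Real.exp (-x) with hFdef
    have hF' : (1:ℝ) - x + x^2/2 ≤ F := by nlinarith [hF]
    have hF1 : (1:ℝ) ≤ F := by nlinarith [sq_nonneg x]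
    have hFne : F ≠ 0 := ne_of_gt hFp
    have key : 0 ≤ (256*x^2-1280*x+768)*F^4 + (-x^2+6*x+20)*F^3
        + (-2*x^3-47*x^2-326*x-668)*F + (256*x+1280) := by
      have hx2 := sq_nonneg x
      have hx3 : 0 ≤ -x^3 := by nlinarith [sq_nonneg x]
      have hx4 : 0 ≤ x^4 := by positivity
      have hx5 : 0 ≤ -x^5 := by nlinarith [sq_nonneg (x*x)]
      have h1 : 0 ≤ (256*x^2-1280*x+768) * ((F - (1-x+x^2/2)) * F^3) :=
        mul_nonneg (by linarith) (mul_nonneg (by linarith) (by positivity))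
      have h2 : 0 ≤ (128*x^4-896*x^3+1919*x^2-2042*x+788) * (F^3 - F) := by
        have hcube : 0 ≤ F * ((F-1) * (F+1)) :=
          mul_nonneg hFp.le (mul_nonneg (by linarith) (by linarith))
        have : 0 ≤ F^3 - F := by nlinarith [hcube]
        exact mul_nonneg (by linarith) this
      have h3 : 0 ≤ (128*x^4-898*x^3+1872*x^2-2368*x+120) * (F - 1 + x) :=
        mul_nonneg (by linarith) (by nlinarith [sq_nonneg x])
      have h4 : (0:ℝ) ≤ -128*x^5+1026*x^4-2770*x^3+4240*x^2-2232*x+1400 := by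
        linarith
      linarith [h1, h2, h3, h4]
    have hid : (0*x^4 + 0*x^3 + 0*x^2 + 256*x + 1280) * (F^2)⁻¹ +
        (0*x^4 + (-2)*x^3 + (-47)*x^2 + (-326)*x + (-668)) * F⁻¹ +
        (0*x^4 + 0*x^3 + 0*x^2 + 0*x + 0) * Real.exp (0*x) +
        (0*x^4 + 0*x^3 + (-1)*x^2 + 6*x + 20) * F +
        (0*x^4 + 0*x^3 + 256*x^2 + (-1280)*x + 768) * F^2
        = ((256*x^2-1280*x+768)*F^4 + (-x^2+6*x+20)*F^3
            + (-2*x^3-47*x^2-326*x-668)*F + (256*x+1280)) / F^2 := by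
      field_simp
      ring
    rw [hid]
    exact div_nonneg key (by positivity)

private lemma cascade_sign {f g : ℝ → ℝ} (hd : ∀ x, HasDerivAt f (g x) x)
    (h0 : f 0 = 0) (hg : ∀ x, 0 ≤ g x) :
    (∀ x, 0 ≤ x → 0 ≤ f x) ∧ (∀ x, x ≤ 0 → f x ≤ 0) := by
  have hmono : Monotone f :=
    monotone_of_deriv_nonneg (fun x => (hd x).differentiableAt)
      (fun x => by rw [(hd x).deriv]; exact hg x)
  constructor
  · intro x hx
    have := hmono hx
    rwa [h0] at this
  · intro x hx
    have := hmono hx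
    rwa [h0] at this

private lemma cascade_pos {f g : ℝ → ℝ} (hd : ∀ x, HasDerivAt f (g x) x)
    (h0 : f 0 = 0) (hR : ∀ x, 0 ≤ x → 0 ≤ g x) (hL : ∀ x, x ≤ 0 → g x ≤ 0) :
    ∀ x, 0 ≤ f x := by
  have hc : Continuous f := by
    have : Differentiable ℝ f := fun x => (hd x).differentiableAt
    exact this.continuous
  have hmono : MonotoneOn f (Set.Ici (0:ℝ)) := by
    apply monotoneOn_of_deriv_nonneg (convex_Ici 0) hc.continuousOn
    · intro x hx
      exact ((hd x).differentiableAt).differentiableWithinAt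
    · intro x hx
      rw [(hd x).deriv]
      rw [interior_Ici] at hx
      exact hR x (le_of_lt hx)
  have hanti : AntitoneOn f (Set.Iic (0:ℝ)) := by
    apply antitoneOn_of_deriv_nonpos (convex_Iic 0) hc.continuousOn
    · intro x hx
      exact ((hd x).differentiableAt).differentiableWithinAt
    · intro x hx
      rw [(hd x).deriv]
      rw [interior_Iic] at hx
      exact hL x (le_of_lt hx)
  intro x
  rcases le_total 0 x with hx | hx
  · have := hmono (Set.self_mem_Ici) (Set.mem_Ici.mpr hx) hx
    rwa [h0] at this
  · have := hanti (Set.mem_Iic.mpr hx) (Set.self_mem_Iic) hx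
    rwa [h0] at this

private lemma s0_nonneg (x : ℝ) : 0 ≤ s0 x := by
  have st7 := cascade_sign sd7 s7_zero s8_nonneg
  have h6 : ∀ x, 0 ≤ s6 x := cascade_pos sd6 s6_zero st7.1 st7.2
  have st5 := cascade_sign sd5 s5_zero h6
  have h4 : ∀ x, 0 ≤ s4 x := cascade_pos sd4 s4_zero st5.1 st5.2
  have st3 := cascade_sign sd3 s3_zero h4
  have h2 : ∀ x, 0 ≤ s2 x := cascade_pos sd2 s2_zero st3.1 st3.2
  have st1 := cascade_sign sd1 s1_zero h2
  exact cascade_pos sd0 s0_zero st1.1 st1.2 x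

private noncomputable def ff (w : ℝ) : ℝ := 1 / Real.log w + 1 / (1 - w)
private noncomputable def ff1 (w : ℝ) : ℝ := -(w * Real.log w ^ 2)⁻¹ + ((1 - w) ^ 2)⁻¹
private noncomputable def ff2 (w : ℝ) : ℝ :=
  (Real.log w ^ 2 + 2 * Real.log w) / (w * Real.log w ^ 2) ^ 2 + 2 / (1 - w) ^ 3

private lemma logne {w : ℝ} (hw0 : 0 < w) (hw1 : w ≠ 1) : Real.log w ≠ 0 := by
  intro hl
  rcases Real.log_eq_zero.mp hl with h | h | h
  · exact (ne_of_gt hw0) h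
  · exact hw1 h
  · linarith

private lemma ffD1 {w : ℝ} (hw0 : 0 < w) (hw1 : w ≠ 1) : HasDerivAt ff (ff1 w) w := by
  have hwne : w ≠ 0 := ne_of_gt hw0
  have hl := logne hw0 hw1
  have hv : (1:ℝ) - w ≠ 0 := sub_ne_zero.mpr (Ne.symm hw1)
  have h1 : HasDerivAt (fun v : ℝ => (Real.log v)⁻¹)
      (-(w⁻¹) / Real.log w ^ 2) w := (Real.hasDerivAt_log hwne).inv hl
  have h2 : HasDerivAt (fun v : ℝ => ((1:ℝ) - v)⁻¹)
      (-(-1) / (1 - w) ^ 2) w := ((hasDerivAt_id w).const_sub 1).inv hv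
  have h := h1.add h2
  have heq : ff = fun v : ℝ => (Real.log v)⁻¹ + ((1:ℝ) - v)⁻¹ := by
    funext v
    rw [ff, one_div, one_div]
  rw [heq, ff1]
  refine h.congr_deriv ?_
  field_simp

private lemma ffD2 {w : ℝ} (hw0 : 0 < w) (hw1 : w ≠ 1) : HasDerivAt ff1 (ff2 w) w := by
  have hwne : w ≠ 0 := ne_of_gt hw0
  have hl := logne hw0 hw1
  have hv : (1:ℝ) - w ≠ 0 := sub_ne_zero.mpr (Ne.symm hw1)
  have h1 : HasDerivAt (fun v : ℝ => v * Real.log v ^ 2)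
      (1 * Real.log w ^ 2 + w * (2 * Real.log w ^ 1 * w⁻¹)) w :=
    (hasDerivAt_id w).mul ((Real.hasDerivAt_log hwne).pow 2)
  have h1' := h1.inv (mul_ne_zero hwne (pow_ne_zero 2 hl))
  have h2 : HasDerivAt (fun v : ℝ => ((1:ℝ) - v) ^ 2)
      (2 * (1 - w) ^ 1 * (-1)) w := ((hasDerivAt_id w).const_sub 1).pow 2
  have h2' := h2.inv (pow_ne_zero 2 hv)
  have h := (h1'.neg).add h2'
  have heq : ff1 = fun v : ℝ => -(v * Real.log v ^ 2)⁻¹ + (((1:ℝ) - v) ^ 2)⁻¹ := by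
    funext v
    rw [ff1]
  rw [heq, ff2]
  refine h.congr_deriv ?_
  field_simp

private lemma nonneg_of_mul_nonneg_right' {a b : ℝ} (h : 0 ≤ a * b) (hb : 0 < b) : 0 ≤ a := by
  nlinarith

set_option maxHeartbeats 1000000 in
theorem stmt_13 (u : ℝ) (hu : 0 < u) (hu1 : u ≠ 1) :
    0 ≤ phi2 u * deriv (deriv phi2) u - (deriv phi2 u) ^ 2 := by
  have hSopen : IsOpen {w : ℝ | 0 < w ∧ w ≠ 1} := by
    have h1 : IsOpen {w : ℝ | 0 < w} := isOpen_lt continuous_const continuous_id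
    have h2 : IsOpen {w : ℝ | w ≠ 1} := isOpen_ne
    exact h1.inter h2
  have huS : u ∈ {w : ℝ | 0 < w ∧ w ≠ 1} := ⟨hu, hu1⟩
  have hphif : ∀ w ∈ {w : ℝ | 0 < w ∧ w ≠ 1}, phi2 w = ff w := by
    intro w hw
    rw [phi2, ff, if_neg hw.2]
  have hd1 : ∀ w ∈ {w : ℝ | 0 < w ∧ w ≠ 1}, deriv phi2 w = ff1 w := by
    intro w hw
    have hev : phi2 =ᶠ[nhds w] ff :=
      Filter.eventually_of_mem (hSopen.mem_nhds hw) hphif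
    rw [hev.deriv_eq, (ffD1 hw.1 hw.2).deriv]
  have hd2 : deriv (deriv phi2) u = ff2 u := by
    have hev : deriv phi2 =ᶠ[nhds u] ff1 :=
      Filter.eventually_of_mem (hSopen.mem_nhds huS) hd1
    rw [hev.deriv_eq, (ffD2 hu hu1).deriv]
  rw [hd2, hd1 u huS, hphif u huS]
  have hl : Real.log u ≠ 0 := logne hu hu1
  have hv : (1:ℝ) - u ≠ 0 := sub_ne_zero.mpr (Ne.symm hu1)
  have hu0 : u ≠ 0 := ne_of_gt hu
  set L := Real.log u with hL
  have hs := s0_nonneg L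
  rw [s0] at hs
  have e0 : Real.exp (0 * L) = 1 := by rw [zero_mul, Real.exp_zero]
  have e1 : Real.exp (1 * L) = u := by rw [one_mul, hL, Real.exp_log hu]
  have e2 : Real.exp (2 * L) = u ^ 2 := by
    rw [two_mul, Real.exp_add, hL, Real.exp_log hu, sq]
  have em1 : Real.exp ((-1) * L) = u⁻¹ := by
    rw [neg_one_mul, Real.exp_neg, hL, Real.exp_log hu]
  have em2 : Real.exp ((-2) * L) = (u ^ 2)⁻¹ := by
    rw [show ((-2):ℝ) * L = -(2 * L) by ring, Real.exp_neg, e2]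
  rw [e0, e1, e2, em1, em2] at hs
  have hP : 0 ≤ (L + 1) * u ^ 4 + (-2*L^3 + L^2 - 6*L - 4) * u ^ 3
      + (L^4 + 2*L^3 - L^2 + 12*L + 6) * u ^ 2
      + (-L^2 - 10*L - 4) * u + (L^2 + 3*L + 1) := by
    have h2 := mul_nonneg hs (sq_nonneg u)
    have hrw : ((0*L^4 + 0*L^3 + 0*L^2 + 1*L + 1) * u ^ 2 +
        (0*L^4 + (-2)*L^3 + 1*L^2 + (-6)*L + (-4)) * u +
        (1*L^4 + 2*L^3 + (-1)*L^2 + 12*L + 6) * 1 +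
        (0*L^4 + 0*L^3 + (-1)*L^2 + (-10)*L + (-4)) * u⁻¹ +
        (0*L^4 + 0*L^3 + 1*L^2 + 3*L + 1) * (u ^ 2)⁻¹) * u ^ 2
        = (L + 1) * u ^ 4 + (-2*L^3 + L^2 - 6*L - 4) * u ^ 3
          + (L^4 + 2*L^3 - L^2 + 12*L + 6) * u ^ 2
          + (-L^2 - 10*L - 4) * u + (L^2 + 3*L + 1) := by
      field_simp
      ring
    rwa [hrw] at h2
  have hL4 : (0:ℝ) < L ^ 4 := by
    have h0 : L ^ 4 ≠ 0 := pow_ne_zero 4 hl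
    have h1 : (0:ℝ) ≤ L ^ 4 := by positivity
    exact lt_of_le_of_ne h1 (Ne.symm h0)
  have hv4 : (0:ℝ) < (1 - u) ^ 4 := by
    have h0 : (1 - u) ^ 4 ≠ 0 := pow_ne_zero 4 hv
    have h1 : (0:ℝ) ≤ (1 - u) ^ 4 := by positivity
    exact lt_of_le_of_ne h1 (Ne.symm h0)
  have hu2 : (0:ℝ) < u ^ 2 := by positivity
  have hden : (0:ℝ) < L ^ 4 * (1 - u) ^ 4 * u ^ 2 :=
    mul_pos (mul_pos hL4 hv4) hu2
  have hid : (ff u * ff2 u - ff1 u ^ 2) * (L ^ 4 * (1 - u) ^ 4 * u ^ 2)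
      = (L + 1) * u ^ 4 + (-2*L^3 + L^2 - 6*L - 4) * u ^ 3
        + (L^4 + 2*L^3 - L^2 + 12*L + 6) * u ^ 2
        + (-L^2 - 10*L - 4) * u + (L^2 + 3*L + 1) := by
    rw [ff, ff1, ff2, ← hL]
    field_simp
    ring
  have hfinal : 0 ≤ (ff u * ff2 u - ff1 u ^ 2) * (L ^ 4 * (1 - u) ^ 4 * u ^ 2) := by
    rw [hid]; exact hP
  exact nonneg_of_mul_nonneg_right' hfinal hden
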